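/- Let f : ℝⁿ → ℝ be μ-strongly convex with L-Lipschitz gradient on the sublevel set S(v₀) = {v : f(v) ≤ f(v₀)}. Consider quasi-Newton iterations v_{m+1} = v_m + α_m Δv_m with Δv_m = -H(v_m)⁻¹∇f(v_m), exact line search α_m = argmin_{α>0} f(v_m + αΔv_m), where each H(v_m) is symmetric positive definite with condition number at most σ. Then for all m ≥ 0, f(v_m) - f(v*) ≤ (1 - μ/(σ²L))ᵐ (f(v₀) - f(v*)), where v* is the unique minimizer of f. -/

import Mathlib

open Matrix Set Topology Filter
open scoped RealInnerProductSpace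


lemma qn_spectral {n : ℕ} [NeZero n] (A : Matrix (Fin n) (Fin n) ℝ) (hA : A.PosDef)
    {a b : ℝ} (ha : ∀ i, a ≤ hA.1.eigenvalues i) (hb : ∀ i, hA.1.eigenvalues i ≤ b)
    (u : EuclideanSpace ℝ (Fin n)) :
    ‖A.toEuclideanLin u‖ ^ 2 ≤ b * ⟪u, A.toEuclideanLin u⟫ ∧
      a * ‖u‖ ^ 2 ≤ ⟪u, A.toEuclideanLin u⟫ := by
  set B := hA.1.eigenvectorBasis with hB
  set lam := hA.1.eigenvalues with hlam
  set T := A.toEuclideanLin with hT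
  have hsymm : ∀ x y : EuclideanSpace ℝ (Fin n), ⟪T x, y⟫ = ⟪x, T y⟫ :=
    fun x y => (Matrix.isHermitian_iff_isSymmetric.mp hA.1) x y
  have hTB : ∀ j, T (B j) = lam j • B j := by
    intro j
    apply (WithLp.equiv 2 _).injective
    simp [hT, toEuclideanLin_apply, hA.1.mulVec_eigenvectorBasis, hB, hlam]
  have hinner : ∀ j, ⟪B j, T u⟫ = lam j * ⟪B j, u⟫ := by
    intro j
    rw [← hsymm, hTB, inner_smul_left]
    simp
  have key1 : ⟪u, T u⟫ = ∑ j, lam j * ⟪B j, u⟫ ^ 2 := by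
    rw [← B.sum_inner_mul_inner u (T u)]
    congr 1; ext j
    rw [hinner j, real_inner_comm u (B j)]; ring
  have key2 : ‖T u‖ ^ 2 = ∑ j, (lam j * ⟪B j, u⟫) ^ 2 := by
    rw [← real_inner_self_eq_norm_sq, ← B.sum_inner_mul_inner (T u) (T u)]
    congr 1; ext j
    rw [hinner j, real_inner_comm (B j) (T u), hinner j]; ring
  have key3 : ‖u‖ ^ 2 = ∑ j, ⟪B j, u⟫ ^ 2 := by
    rw [← real_inner_self_eq_norm_sq, ← B.sum_inner_mul_inner u u]
    congr 1; ext j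
    rw [real_inner_comm u (B j)]; ring
  have hpos : ∀ j, 0 < lam j := fun j => hA.eigenvalues_pos j
  constructor
  · rw [key2, key1, Finset.mul_sum]
    apply Finset.sum_le_sum
    intro j _
    have := hpos j
    have := hb j
    nlinarith [sq_nonneg (⟪B j, u⟫ : ℝ)]
  · rw [key3, key1, Finset.mul_sum]
    apply Finset.sum_le_sum
    intro j _
    have := ha j
    nlinarith [sq_nonneg (⟪B j, u⟫ : ℝ)]

variable {E : Type*} [NormedAddCommGroup E] [InnerProductSpace ℝ E] [CompleteSpace E]

lemma qn_grad_normsq (μ : ℝ) (x : E) :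
    HasGradientAt (fun y : E => μ / 2 * ‖y‖ ^ 2) (μ • x) x := by
  rw [hasGradientAt_iff_hasFDerivAt]
  have h1 : HasFDerivAt (fun y : E => ⟪y, y⟫)
      ((fderivInnerCLM ℝ (x, x)).comp ((ContinuousLinearMap.id ℝ E).prod (ContinuousLinearMap.id ℝ E))) x :=
    (hasFDerivAt_id x).inner ℝ (hasFDerivAt_id x)
  have h2 : HasFDerivAt (fun y : E => μ / 2 * ‖y‖ ^ 2)
      ((μ / 2) • ((fderivInnerCLM ℝ (x, x)).comp ((ContinuousLinearMap.id ℝ E).prod (ContinuousLinearMap.id ℝ E)))) x := by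
    have := h1.const_smul (μ / 2)
    convert this using 1
    · rfl
    · ext y
      simp [real_inner_self_eq_norm_sq]
  refine h2.congr_fderiv ?_
  ext v
  simp [fderivInnerCLM, real_inner_smul_left, real_inner_comm x v]
  ring

lemma qn_first_order {h : E → ℝ} (hconv : ConvexOn ℝ Set.univ h) {G x : E}
    (hG : HasGradientAt h G x) (y : E) : h x + ⟪G, y - x⟫ ≤ h y := by
  rcases eq_or_ne y x with rfl | hne
  · simp
  set ψ : ℝ → ℝ := fun t => h (x + t • (y - x)) with hψ
  have hψconv : ConvexOn ℝ Set.univ ψ := by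
    have h1 := hconv.comp_affineMap (AffineMap.lineMap x y : ℝ →ᵃ[ℝ] E)
    have heq : ψ = h ∘ (AffineMap.lineMap x y : ℝ →ᵃ[ℝ] E) := by
      funext t
      simp only [hψ, Function.comp_apply, AffineMap.lineMap_apply_module]
      congr 1
      module
    rw [heq]
    simpa using h1
  have hd : HasDerivAt ψ ⟪G, y - x⟫ 0 := by
    have hγ : HasDerivAt (fun t : ℝ => x + t • (y - x)) (y - x) 0 := by
      simpa using ((hasDerivAt_id (0:ℝ)).smul_const (y - x)).const_add x
    have hF : HasFDerivAt h ((InnerProductSpace.toDual ℝ E) G) (x + (0:ℝ) • (y - x)) := by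
      simpa using hasGradientAt_iff_hasFDerivAt.mp hG
    have := hF.comp_hasDerivAt 0 hγ
    exact this
  have hslope := hψconv.le_slope_of_hasDerivAt (Set.mem_univ (0:ℝ)) (Set.mem_univ (1:ℝ))
    one_pos hd
  have : slope ψ 0 1 = ψ 1 - ψ 0 := by simp [slope_def_field]
  rw [this] at hslope
  have h0 : ψ 0 = h x := by simp [hψ]
  have h1 : ψ 1 = h y := by simp [hψ]
  linarith

lemma qn_strong_ineq {f : E → ℝ} {μ : ℝ}
    (hsc : ConvexOn ℝ Set.univ (fun x => f x - μ / 2 * ‖x‖ ^ 2))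
    (hf : Differentiable ℝ f) (x y : E) :
    f x + ⟪gradient f x, y - x⟫ + μ / 2 * ‖y - x‖ ^ 2 ≤ f y := by
  set h : E → ℝ := fun z => f z - μ / 2 * ‖z‖ ^ 2 with hh
  have hGf : HasGradientAt f (gradient f x) x := (hf x).hasGradientAt
  have hGh : HasGradientAt h (gradient f x - μ • x) x := by
    rw [hasGradientAt_iff_hasFDerivAt] at *
    have := hGf.sub (hasGradientAt_iff_hasFDerivAt.mp (qn_grad_normsq μ x))
    rw [map_sub]; exact this
  have := qn_first_order hsc hGh y
  simp only [hh] at this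
  have hexp : ⟪gradient f x - μ • x, y - x⟫ = ⟪gradient f x, y - x⟫ - μ * ⟪x, y - x⟫ := by
    rw [inner_sub_left, real_inner_smul_left]
  have hnorm : ‖y‖ ^ 2 - ‖x‖ ^ 2 - 2 * ⟪x, y - x⟫ = ‖y - x‖ ^ 2 := by
    rw [inner_sub_right, ← real_inner_self_eq_norm_sq, ← real_inner_self_eq_norm_sq,
      ← real_inner_self_eq_norm_sq, inner_sub_sub_self]
    ring_nf
    linear_combination real_inner_comm x y
  rw [hexp] at this
  rw [← hnorm]
  ring_nf at this ⊢
  linarith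

lemma qn_pl {f : E → ℝ} {μ : ℝ} (hμ : 0 < μ)
    (hsc : ConvexOn ℝ Set.univ (fun x => f x - μ / 2 * ‖x‖ ^ 2))
    (hf : Differentiable ℝ f) (vstar : E) (hmin : ∀ w, f vstar ≤ f w) (x : E) :
    2 * μ * (f x - f vstar) ≤ ‖gradient f x‖ ^ 2 := by
  have h := qn_strong_ineq hsc hf x vstar
  have hcs : ⟪gradient f x, vstar - x⟫ ≥ -(‖gradient f x‖ * ‖vstar - x‖) := by
    have := abs_real_inner_le_norm (gradient f x) (vstar - x)
    have := abs_le.mp this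
    linarith [this.1]
  nlinarith [sq_nonneg (‖gradient f x‖ - μ * ‖vstar - x‖), hμ, h, hcs]

lemma qn_phi_deriv {f : E → ℝ} (hf : Differentiable ℝ f) (x dvec : E) (t : ℝ) :
    HasDerivAt (fun s : ℝ => f (x + s • dvec)) ⟪gradient f (x + t • dvec), dvec⟫ t := by
  have hγ : HasDerivAt (fun s : ℝ => x + s • dvec) dvec t := by
    simpa using ((hasDerivAt_id t).smul_const dvec).const_add x
  have hF : HasFDerivAt f ((InnerProductSpace.toDual ℝ E) (gradient f (x + t • dvec)))
      (x + t • dvec) := hasGradientAt_iff_hasFDerivAt.mp (hf _).hasGradientAt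
  have := hF.comp_hasDerivAt t hγ
  exact this

lemma qn_descent {f : E → ℝ} (hf : Differentiable ℝ f) (hconv : ConvexOn ℝ Set.univ f)
    {L : ℝ} (hL : 0 < L) {S : Set E} (hLip : LipschitzOnWith (Real.toNNReal L) (gradient f) S)
    {x dvec : E} (hS : ∀ y, f y ≤ f x → y ∈ S) {c : ℝ}
    (hc : ⟪gradient f x, dvec⟫ = -c) (hcpos : 0 < c) :
    ∃ t : ℝ, 0 < t ∧ f (x + t • dvec) ≤ f x - c ^ 2 / (2 * L * ‖dvec‖ ^ 2) := by
  have hdne : dvec ≠ 0 := by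
    rintro rfl
    simp at hc
    rw [← hc] at hcpos
    simp at hcpos
  set D : ℝ := ‖dvec‖ ^ 2 with hD
  have hDpos : 0 < D := by
    have := norm_pos_iff.mpr hdne
    positivity
  set φ : ℝ → ℝ := fun s => f (x + s • dvec) with hφ
  have hφd : ∀ t, HasDerivAt φ ⟪gradient f (x + t • dvec), dvec⟫ t :=
    fun t => qn_phi_deriv hf x dvec t
  have hφcont : Continuous φ :=
    (hf.continuous).comp (continuous_const.add (continuous_id.smul continuous_const))
  have hφ0 : φ 0 = f x := by simp [hφ]
  set tstar : ℝ := c / (L * D) with htstar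
  have htstarpos : 0 < tstar := by positivity
  -- the key quadratic bound on intervals staying in the sublevel set
  have key : ∀ T, 0 ≤ T → (∀ s, 0 ≤ s → s ≤ T → φ s ≤ φ 0) →
      φ T ≤ φ 0 - c * T + L * D * T ^ 2 / 2 := by
    intro T hT0 hsub
    rcases eq_or_lt_of_le hT0 with rfl | hTpos
    · simp
    set ρ : ℝ → ℝ := fun t => φ t + c * t - L * D * t ^ 2 / 2 with hρ
    have hρd : ∀ t, HasDerivAt ρ (⟪gradient f (x + t • dvec), dvec⟫ + c - L * D * t) t := by
      intro t
      have h1 := (hφd t).add (((hasDerivAt_id t).const_mul c))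
      have h2 := ((hasDerivAt_id t).pow 2).const_mul (L * D / 2)
      have := h1.sub h2
      convert this using 1
      · rfl
      · rfl
      · funext s; simp [hρ]; ring
      · simp; ring
    have hρ' : ∀ t ∈ interior (Icc (0:ℝ) T), deriv ρ t ≤ 0 := by
      intro t ht
      rw [interior_Icc] at ht
      have htmem : x + t • dvec ∈ S := by
        apply hS
        have := hsub t ht.1.le ht.2.le
        rw [hφ0] at this
        exact this
      have hxmem : x ∈ S := hS x le_rfl
      have hlip := hLip.norm_sub_le htmem hxmem
      have hLnn : (Real.toNNReal L : ℝ) = L := Real.coe_toNNReal L hL.le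
      rw [hLnn] at hlip
      have hdist : ‖(x + t • dvec) - x‖ = t * ‖dvec‖ := by
        simp [norm_smul, abs_of_pos ht.1]
      rw [hdist] at hlip
      have hib : ⟪gradient f (x + t • dvec) - gradient f x, dvec⟫ ≤ L * (t * ‖dvec‖) * ‖dvec‖ := by
        calc ⟪gradient f (x + t • dvec) - gradient f x, dvec⟫
            ≤ ‖gradient f (x + t • dvec) - gradient f x‖ * ‖dvec‖ := real_inner_le_norm _ _
          _ ≤ L * (t * ‖dvec‖) * ‖dvec‖ := by
              apply mul_le_mul_of_nonneg_right hlip (norm_nonneg _)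
      rw [(hρd t).deriv]
      have hsplit : ⟪gradient f (x + t • dvec), dvec⟫ =
          ⟪gradient f (x + t • dvec) - gradient f x, dvec⟫ + ⟪gradient f x, dvec⟫ := by
        rw [inner_sub_left]; ring
      rw [hsplit, hc]
      have : L * (t * ‖dvec‖) * ‖dvec‖ = L * D * t := by rw [hD]; ring
      linarith [hib, this ▸ hib]
    have hρcont : Continuous ρ :=
      (hφcont.add (continuous_const.mul continuous_id)).sub
        ((continuous_const.mul (continuous_pow 2)).div_const 2)
    have hanti : AntitoneOn ρ (Icc 0 T) := by
      apply antitoneOn_of_deriv_nonpos (convex_Icc 0 T) hρcont.continuousOn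
      · intro t _
        exact ((hρd t).differentiableAt).differentiableWithinAt
      · exact hρ'
    have := hanti (left_mem_Icc.mpr hT0) (right_mem_Icc.mpr hT0) hT0
    simp only [hρ] at this
    have h0 : φ 0 + c * 0 - L * D * 0 ^ 2 / 2 = φ 0 := by ring
    linarith [this]
  -- φ is convex
  have hφconv : ConvexOn ℝ Set.univ φ := by
    have h1 := hconv.comp_affineMap (AffineMap.lineMap x (x + dvec) : ℝ →ᵃ[ℝ] E)
    have heq : φ = f ∘ (AffineMap.lineMap x (x + dvec) : ℝ →ᵃ[ℝ] E) := by
      funext t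
      simp only [hφ, Function.comp_apply, AffineMap.lineMap_apply_module]
      congr 1
      module
    rw [heq]
    simpa using h1
  have hAconv : Convex ℝ {t : ℝ | φ t ≤ φ 0} := by
    have := hφconv.convex_le (φ 0)
    simpa using this
  set K : Set ℝ := {t : ℝ | φ t ≤ φ 0} ∩ Icc 0 tstar with hK
  have hKclosed : IsClosed K :=
    (isClosed_le hφcont continuous_const).inter isClosed_Icc
  have hK0 : (0:ℝ) ∈ K := ⟨by simp [Set.mem_setOf_eq], le_rfl, htstarpos.le⟩
  have hKbdd : BddAbove K := ⟨tstar, fun t ht => ht.2.2⟩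
  set e : ℝ := sSup K with he
  have heK : e ∈ K := hKclosed.csSup_mem ⟨0, hK0⟩ hKbdd
  have hIccK : Icc (0:ℝ) e ⊆ {t : ℝ | φ t ≤ φ 0} :=
    (hAconv.ordConnected.out hK0.1 heK.1)
  have he_sub : ∀ s, 0 ≤ s → s ≤ e → φ s ≤ φ 0 := fun s h1 h2 => hIccK ⟨h1, h2⟩
  have hquad : φ e ≤ φ 0 - c * e + L * D * e ^ 2 / 2 := key e heK.2.1 he_sub
  have hetstar : e = tstar := by
    by_contra hne
    have hlt : e < tstar := lt_of_le_of_ne heK.2.2 hne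
    have hev : ∀ᶠ t in 𝓝[>] e, φ t < φ 0 := by
      rcases eq_or_lt_of_le heK.2.1 with h0e | h0e
      · -- e = 0 : use the negative derivative at 0
        have h00 : x + (0:ℝ) • dvec = x := by simp
        have hder : HasDerivAt φ (-c) 0 := by
          have := hφd 0
          rwa [h00, hc] at this
        have hslope := hasDerivAt_iff_tendsto_slope.mp hder
        have hev1 : ∀ᶠ t in 𝓝[≠] (0:ℝ), slope φ 0 t < 0 := by
          apply hslope.eventually_lt_const
          linarith
        have hev2 : ∀ᶠ t in 𝓝[>] (0:ℝ), slope φ 0 t < 0 :=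
          hev1.filter_mono (nhdsWithin_mono 0 (fun t ht => ne_of_gt ht))
        rw [← h0e]
        refine (hev2.and self_mem_nhdsWithin).mono ?_
        rintro t ⟨hst, htpos⟩
        have : (φ t - φ 0) / t < 0 := by
          have : slope φ 0 t = (φ t - φ 0) / (t - 0) := slope_def_field φ 0 t
          rw [this, sub_zero] at hst
          exact hst
        have := div_neg_iff.mp this
        rcases this with ⟨h1, h2⟩ | ⟨h1, h2⟩
        · linarith [htpos, h2]
        · linarith [h1]
      · -- e > 0 : strict decrease at e, use continuity
        have hstrict : φ e < φ 0 := by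
          have hLD : 0 < L * D := mul_pos hL hDpos
          have hel : e * (L * D) < c := by
            rw [htstar] at hlt
            exact (lt_div_iff₀ hLD).mp hlt
          have : c * e - L * D * e ^ 2 / 2 > 0 := by
            nlinarith [mul_lt_mul_of_pos_left hel h0e, mul_pos hcpos h0e]
          linarith [hquad]
        have hopen : ∀ᶠ t in 𝓝 e, φ t < φ 0 :=
          (hφcont.continuousAt).eventually_lt continuousAt_const hstrict
        exact hopen.filter_mono nhdsWithin_le_nhds
    have hmem : Ioo e tstar ∈ 𝓝[>] e := Ioo_mem_nhdsGT hlt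
    obtain ⟨t', ht'1, ht'2⟩ := (hev.and (Filter.eventually_of_mem hmem (fun t ht => ht))).exists
    have ht'K : t' ∈ K := ⟨ht'1.le, ⟨heK.2.1.trans ht'2.1.le, ht'2.2.le⟩⟩
    have := le_csSup hKbdd ht'K
    linarith [ht'2.1]
  refine ⟨tstar, htstarpos, ?_⟩
  rw [hetstar] at hquad
  rw [hφ0] at hquad
  have hLD : (L : ℝ) ≠ 0 := ne_of_gt hL
  have hDne : D ≠ 0 := ne_of_gt hDpos
  have : f x - c * tstar + L * D * tstar ^ 2 / 2 = f x - c ^ 2 / (2 * L * D) := by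
    rw [htstar]
    field_simp
    ring
  calc f (x + tstar • dvec) = φ tstar := rfl
    _ ≤ f x - c * tstar + L * D * tstar ^ 2 / 2 := by
        have h0' : φ 0 = f x := hφ0
        linarith [hquad]
    _ = f x - c ^ 2 / (2 * L * ‖dvec‖ ^ 2) := by rw [this, hD]


set_option maxHeartbeats 1000000 in
/-- Linear convergence of quasi-Newton iterations with exact line search:
if `f` is `μ`-strongly convex with `L`-Lipschitz gradient on the sublevel set of `v₀`,
and the SPD Hessian approximations have condition number at most `σ` there, then
`f(v_m) - f(v*) ≤ (1 - μ/(σ²L))^m (f(v₀) - f(v*))`. -/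
theorem quasi_newton_linear_convergence
    (n : ℕ) [NeZero n]
    (f : EuclideanSpace ℝ (Fin n) → ℝ) (μ L σ : ℝ)
    (hμ : 0 < μ) (hμL : μ ≤ L)
    (hsc : ConvexOn ℝ Set.univ (fun x => f x - μ / 2 * ‖x‖ ^ 2))
    (hf : Differentiable ℝ f)
    (v0 : EuclideanSpace ℝ (Fin n))
    (hLip : LipschitzOnWith (Real.toNNReal L) (gradient f) {v | f v ≤ f v0})
    (H : EuclideanSpace ℝ (Fin n) → Matrix (Fin n) (Fin n) ℝ)
    (hH : ∀ v ∈ {v | f v ≤ f v0}, H v |>.PosDef)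
    (hcond : ∀ v (hv : v ∈ {v | f v ≤ f v0}),
      (⨆ i, (hH v hv).1.eigenvalues i) / (⨅ i, (hH v hv).1.eigenvalues i) ≤ σ)
    (v : ℕ → EuclideanSpace ℝ (Fin n)) (hv0 : v 0 = v0)
    (d : ℕ → EuclideanSpace ℝ (Fin n))
    (hd : ∀ m, d m = -(WithLp.equiv 2 (Fin n → ℝ)).symm
        ((H (v m))⁻¹.mulVec (WithLp.equiv 2 (Fin n → ℝ) (gradient f (v m)))))
    (α : ℕ → ℝ)
    (hα : ∀ m, IsMinOn (fun a : ℝ => f (v m + a • d m)) (Set.Ioi 0) (α m) ∧ 0 < α m)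
    (hstep : ∀ m, v (m + 1) = v m + α m • d m)
    (vstar : EuclideanSpace ℝ (Fin n)) (hmin : ∀ w, f vstar ≤ f w) :
    ∀ m, f (v m) - f vstar ≤ (1 - μ / (σ ^ 2 * L)) ^ m * (f v0 - f vstar) := by
  haveI : Nonempty (Fin n) := Fin.pos_iff_nonempty.mp (Nat.pos_of_ne_zero (NeZero.ne n))
  have hLpos : 0 < L := lt_of_lt_of_le hμ hμL
  set Kc : ℝ := 1 - μ / (σ ^ 2 * L) with hKc
  -- eigenvalue bounds at a point of the sublevel set
  have eigfacts : ∀ x (hx : x ∈ {v | f v ≤ f v0}),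
      (0 < ⨅ i, (hH x hx).1.eigenvalues i) ∧
      (∀ i, (⨅ i, (hH x hx).1.eigenvalues i) ≤ (hH x hx).1.eigenvalues i) ∧
      (∀ i, (hH x hx).1.eigenvalues i ≤ ⨆ i, (hH x hx).1.eigenvalues i) ∧
      (⨅ i, (hH x hx).1.eigenvalues i) ≤ ⨆ i, (hH x hx).1.eigenvalues i := by
    intro x hx
    set lam := (hH x hx).1.eigenvalues with hlam
    have hbdd : BddBelow (Set.range lam) := (Set.finite_range lam).bddBelow
    have hbdd2 : BddAbove (Set.range lam) := (Set.finite_range lam).bddAbove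
    have hle : ∀ i, (⨅ i, lam i) ≤ lam i := fun i => ciInf_le hbdd i
    have hge : ∀ i, lam i ≤ ⨆ i, lam i := fun i => le_ciSup hbdd2 i
    obtain ⟨i0, -, hi0⟩ := Finset.exists_min_image Finset.univ lam
      ⟨Classical.arbitrary (Fin n), Finset.mem_univ _⟩
    have hmin0 : lam i0 ≤ ⨅ i, lam i := le_ciInf (fun i => hi0 i (Finset.mem_univ i))
    have hpos : 0 < ⨅ i, lam i :=
      lt_of_lt_of_le ((hH x hx).eigenvalues_pos i0) hmin0
    exact ⟨hpos, hle, hge, le_trans (hle i0) (hge i0)⟩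
  -- σ ≥ 1
  have hv0S : v0 ∈ {v | f v ≤ f v0} := by simp [Set.mem_setOf_eq]
  have hσ1 : 1 ≤ σ := by
    obtain ⟨hpos, _, _, hab⟩ := eigfacts v0 hv0S
    exact le_trans ((one_le_div hpos).mpr hab) (hcond v0 hv0S)
  have hσpos : 0 < σ := lt_of_lt_of_le one_pos hσ1
  have hKc0 : 0 ≤ Kc := by
    have hσ2 : (1:ℝ) ≤ σ ^ 2 := by nlinarith
    have hσ2L : L ≤ σ ^ 2 * L := by nlinarith
    rw [hKc, sub_nonneg, div_le_one (by nlinarith)]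
    linarith
  have hfconv : ConvexOn ℝ Set.univ f :=
    strongConvexOn_zero.mp ((strongConvexOn_iff_convex.mpr hsc).mono hμ.le)
  -- per-step decrease
  have step : ∀ m, f (v m) ≤ f v0 →
      f (v (m+1)) - f vstar ≤ Kc * (f (v m) - f vstar) ∧ f (v (m+1)) ≤ f (v m) := by
    intro m hx
    set x := v m with hxdef
    have hxS : x ∈ {v | f v ≤ f v0} := hx
    set g' := gradient f x with hg'
    set N := H x with hN
    have hPD := hH x hxS
    set lam := hPD.1.eigenvalues with hlam
    set a := ⨅ i, lam i with ha
    set b := ⨆ i, lam i with hb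
    obtain ⟨hapos, hale, hbge, hab⟩ := eigfacts x hxS
    have hbpos : 0 < b := lt_of_lt_of_le hapos hab
    have hσab : b / a ≤ σ := hcond x hxS
    have hba : b ≤ σ * a := (div_le_iff₀ hapos).mp hσab
    set u' : EuclideanSpace ℝ (Fin n) :=
      (WithLp.equiv 2 (Fin n → ℝ)).symm ((N⁻¹).mulVec (WithLp.equiv 2 (Fin n → ℝ) g')) with hu'
    have hdm : d m = -u' := hd m
    have hNinv : N * N⁻¹ = 1 :=
      Matrix.mul_nonsing_inv N (isUnit_iff_ne_zero.mpr (ne_of_gt hPD.det_pos))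
    have hTu : N.toEuclideanLin u' = g' := by
      rw [Matrix.toEuclideanLin_apply, hu']
      simp only [WithLp.equiv_symm_apply, WithLp.ofLp_toLp]
      rw [Matrix.mulVec_mulVec, hNinv, Matrix.one_mulVec]
      exact (WithLp.equiv 2 (Fin n → ℝ)).symm_apply_apply g'
    have spec := qn_spectral N hPD hale hbge u'
    rw [hTu] at spec
    obtain ⟨spec1, spec2⟩ := spec
    -- the case of zero gradient
    by_cases hg0 : g' = 0
    · have hu0 : u' = 0 := by
        rw [hu', hg0]
        simp [Matrix.mulVec_zero]
      have hv1 : v (m+1) = x := by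
        rw [hstep m, hdm, hu0]
        simp [hxdef]
      have hfxle : f x ≤ f vstar := by
        have := qn_strong_ineq hsc hf x vstar
        rw [← hg', hg0] at this
        simp only [inner_zero_left] at this
        nlinarith [this, norm_nonneg (vstar - x), sq_nonneg ‖vstar - x‖, hμ]
      have hfeq : f x = f vstar := le_antisymm hfxle (hmin x)
      rw [hv1, hfeq]
      simp
    -- main case
    · set c : ℝ := ⟪u', g'⟫ with hc
      have hGpos : 0 < ‖g'‖ ^ 2 := by
        have := norm_pos_iff.mpr hg0
        positivity
      have hcpos : 0 < c := by nlinarith [spec1, hbpos, hGpos]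
      have hune : u' ≠ 0 := by
        intro h0
        rw [hc, h0] at hcpos
        simp at hcpos
      have hU : 0 < ‖u'‖ ^ 2 := by
        have := norm_pos_iff.mpr hune
        positivity
      have hinner_d : ⟪gradient f x, d m⟫ = -c := by
        rw [hdm, inner_neg_right, hc, real_inner_comm, ← hg']
      have hSprop : ∀ y, f y ≤ f x → y ∈ {v | f v ≤ f v0} :=
        fun y hy => le_trans hy hx
      obtain ⟨t, htpos, hdec⟩ := qn_descent hf hfconv hLpos hLip hSprop hinner_d hcpos
      have hls := isMinOn_iff.mp (hα m).1 t (Set.mem_Ioi.mpr htpos)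
      have hnd : ‖d m‖ = ‖u'‖ := by rw [hdm, norm_neg]
      have h1 : f (v (m+1)) ≤ f x - c ^ 2 / (2 * L * ‖u'‖ ^ 2) := by
        rw [hstep m]
        refine le_trans hls ?_
        rw [← hnd]
        exact hdec
      have hPL : 2 * μ * (f x - f vstar) ≤ ‖g'‖ ^ 2 := qn_pl hμ hsc hf vstar hmin x
      have hΔ : 0 ≤ f x - f vstar := sub_nonneg.mpr (hmin x)
      set G : ℝ := ‖g'‖ ^ 2 with hG
      set U : ℝ := ‖u'‖ ^ 2 with hU2
      have hspec1 : G ≤ b * c := spec1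
      have hspec2 : a * U ≤ c := spec2
      have hapos' : 0 < a := hapos
      clear_value G U c a b
      have hs1 : a * U * G ≤ c ^ 2 * b := by
        nlinarith [hspec1, hspec2, hcpos, hGpos.le, hapos', hU]
      have hkey : μ / (σ ^ 2 * L) * (f x - f vstar) ≤ c ^ 2 / (2 * L * U) := by
        rw [div_mul_eq_mul_div, div_le_div_iff₀ (mul_pos (pow_pos hσpos 2) hLpos)
          (mul_pos (mul_pos two_pos hLpos) hU)]
        have e1 : c ^ 2 * b ≤ c ^ 2 * (σ * a) :=
          mul_le_mul_of_nonneg_left hba (sq_nonneg c)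
        have e2 : c ^ 2 * (σ * a) ≤ c ^ 2 * σ ^ 2 * a := by
          nlinarith [mul_nonneg (mul_nonneg (mul_nonneg (sq_nonneg c) hapos'.le) hσpos.le)
            (sub_nonneg.mpr hσ1)]
        have h3 : a * (U * G) ≤ a * (c ^ 2 * σ ^ 2) := by nlinarith [hs1, e1, e2]
        have hc2 : U * G ≤ c ^ 2 * σ ^ 2 := le_of_mul_le_mul_left h3 hapos'
        have h4 := mul_le_mul_of_nonneg_left hPL (mul_pos hLpos hU).le
        have h5 := mul_le_mul_of_nonneg_left hc2 hLpos.le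
        nlinarith only [h4, h5]
      constructor
      · have : μ / (σ ^ 2 * L) * (f x - f vstar) ≤ c ^ 2 / (2 * L * U) := hkey
        have hKcexp : Kc * (f x - f vstar) =
            (f x - f vstar) - μ / (σ ^ 2 * L) * (f x - f vstar) := by
          rw [hKc]; ring
        rw [hKcexp]
        linarith [h1, hkey]
      · have hpos : 0 ≤ c ^ 2 / (2 * L * U) := by positivity
        linarith [h1]
  -- induction
  have main : ∀ m, f (v m) ≤ f v0 ∧ f (v m) - f vstar ≤ Kc ^ m * (f v0 - f vstar) := by
    intro m
    induction m with
    | zero => exact ⟨le_of_eq (congrArg f hv0), by rw [hv0]; simp⟩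
    | succ k ih =>
      obtain ⟨ih1, ih2⟩ := ih
      obtain ⟨s1, s2⟩ := step k ih1
      refine ⟨le_trans s2 ih1, ?_⟩
      calc f (v (k+1)) - f vstar ≤ Kc * (f (v k) - f vstar) := s1
        _ ≤ Kc * (Kc ^ k * (f v0 - f vstar)) := mul_le_mul_of_nonneg_left ih2 hKc0
        _ = Kc ^ (k+1) * (f v0 - f vstar) := by rw [pow_succ]; ring
  exact fun m => (main m).2
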